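/- For every g ≥ 1, the number m_g of numerical semigroups of genus g having infinitely many descendants in the semigroup tree satisfies m_g ≤ 1 + (g−1) · Σ_{i=0}^{⌊(g−1)/2⌋} n_i, where n_i is the total number of numerical semigroups of genus i (with n₀ = 1). -/

import Mathlib

def IsNumericalSemigroup (Λ : Set ℕ) : Prop :=
  0 ∈ Λ ∧ (∀ a ∈ Λ, ∀ b ∈ Λ, a + b ∈ Λ) ∧ Λᶜ.Finite

noncomputable def sgGenus (Λ : Set ℕ) : ℕ := Λᶜ.ncard

noncomputable def sgFrobenius (Λ : Set ℕ) : ℕ := sSup Λᶜ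

noncomputable def sgMultiplicity (Λ : Set ℕ) : ℕ := sInf (Λ \ {0})

def IsMinimalGenerator (Λ : Set ℕ) (μ : ℕ) : Prop :=
  μ ∈ Λ ∧ μ ≠ 0 ∧ ¬ ∃ a ∈ Λ, ∃ b ∈ Λ, a ≠ 0 ∧ b ≠ 0 ∧ a + b = μ

def IsEffectiveGenerator (Λ : Set ℕ) (μ : ℕ) : Prop :=
  IsMinimalGenerator Λ μ ∧ sgFrobenius Λ < μ

def IsOrdinary (Λ : Set ℕ) : Prop := ∃ m : ℕ, Λ = {0} ∪ {n : ℕ | m ≤ n}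

def IsStrongGenerator (Λ : Set ℕ) (μ : ℕ) : Prop :=
  IsEffectiveGenerator Λ μ ∧ IsMinimalGenerator (Λ \ {μ}) (sgMultiplicity Λ + μ)

def IsChildOf (Λ' Λ : Set ℕ) : Prop :=
  IsNumericalSemigroup Λ' ∧ Λ' ⊂ Λ ∧ Λ' ∪ {sgFrobenius Λ'} = Λ

def sgDescendants (Λ : Set ℕ) : Set (Set ℕ) :=
  {Λ' | Relation.TransGen IsChildOf Λ' Λ}

lemma ns_mem_of_frob_lt {Λ : Set ℕ} (hΛ : IsNumericalSemigroup Λ) {n : ℕ}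
    (hn : sgFrobenius Λ < n) : n ∈ Λ := by
  by_contra h
  exact absurd (le_csSup hΛ.2.2.bddAbove h) (not_le.mpr hn)

lemma frob_mem_compl {Λ : Set ℕ} (hΛ : IsNumericalSemigroup Λ) (h : Λᶜ.Nonempty) :
    sgFrobenius Λ ∈ Λᶜ := Nat.sSup_mem h hΛ.2.2.bddAbove

open Classical in
noncomputable def sgAF (Λ : Set ℕ) : Finset ℕ :=
  (Finset.range (sgFrobenius Λ + 1)).filter (fun a => a ∈ Λ)

noncomputable def sgD (Λ : Set ℕ) : ℕ := (sgAF Λ).gcd id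

def sgS (Λ : Set ℕ) : Set ℕ := {x | sgD Λ * x ∈ Λ}

lemma mem_sgAF {Λ : Set ℕ} {a : ℕ} : a ∈ sgAF Λ ↔ a ∈ Λ ∧ a ≤ sgFrobenius Λ := by
  classical
  simp [sgAF, Finset.mem_filter, Finset.mem_range, Nat.lt_succ_iff, and_comm]

lemma sgD_dvd {Λ : Set ℕ} {a : ℕ} (ha : a ∈ Λ) (haf : a ≤ sgFrobenius Λ) : sgD Λ ∣ a :=
  Finset.gcd_dvd (mem_sgAF.mpr ⟨ha, haf⟩)

lemma ns_closure_subset {A S : Set ℕ} (hS : IsNumericalSemigroup S) (h : A ⊆ S) :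
    ∀ x ∈ AddSubmonoid.closure A, x ∈ S := by
  intro x hx
  induction hx using AddSubmonoid.closure_induction with
  | mem a ha => exact h ha
  | zero => exact hS.1
  | add a b _ _ ha hb => exact hS.2.1 a ha b hb

lemma child_props {Λ' Λ : Set ℕ} (h : IsChildOf Λ' Λ) (hΛ : IsNumericalSemigroup Λ) :
    Λ' ⊆ Λ ∧ (∀ x ∈ Λ, x ≤ sgFrobenius Λ → x ∈ Λ') ∧ sgFrobenius Λ ≤ sgFrobenius Λ' := by
  obtain ⟨hΛ', hsub, hunion⟩ := h
  have hsub' := hsub.subset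
  have hne : Λ'ᶜ.Nonempty := by
    obtain ⟨x, hxΛ, hxΛ'⟩ := Set.exists_of_ssubset hsub
    exact ⟨x, hxΛ'⟩
  have hf' : sgFrobenius Λ' ∈ Λ'ᶜ := frob_mem_compl hΛ' hne
  have hf'Λ : sgFrobenius Λ' ∈ Λ := by
    rw [← hunion]; right; rfl
  rcases Set.eq_empty_or_nonempty Λᶜ with hc | hc
  · have hf0 : sgFrobenius Λ = 0 := by simp [sgFrobenius, hc]
    refine ⟨hsub', ?_, by omega⟩
    intro x hxΛ hx
    have hx0 : x = 0 := by omega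
    subst hx0
    exact hΛ'.1
  · have hfΛ : sgFrobenius Λ ∈ Λᶜ := frob_mem_compl hΛ hc
    have hle : sgFrobenius Λ ≤ sgFrobenius Λ' :=
      le_csSup hΛ'.2.2.bddAbove (fun hm => hfΛ (hsub' hm))
    have hlt : sgFrobenius Λ < sgFrobenius Λ' :=
      lt_of_le_of_ne hle (fun he => hfΛ (he ▸ hf'Λ))
    refine ⟨hsub', ?_, hle⟩
    intro x hxΛ hx
    rw [← hunion] at hxΛ
    rcases hxΛ with hm | hm
    · exact hm
    · exfalso
      have : x = sgFrobenius Λ' := hm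
      omega

lemma desc_props {Λ'' Λ : Set ℕ} (h : Relation.TransGen IsChildOf Λ'' Λ)
    (hΛ : IsNumericalSemigroup Λ) :
    IsNumericalSemigroup Λ'' ∧ Λ'' ⊆ Λ ∧ (∀ x ∈ Λ, x ≤ sgFrobenius Λ → x ∈ Λ'') ∧
      sgFrobenius Λ ≤ sgFrobenius Λ'' := by
  induction h with
  | single h1 =>
    obtain ⟨hsub, hmid, hle⟩ := child_props h1 hΛ
    exact ⟨h1.1, hsub, hmid, hle⟩
  | tail h1 h2 ih =>
    obtain ⟨hsub, hmid, hle⟩ := child_props h2 hΛ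
    obtain ⟨hns, hsub', hmid', hle'⟩ := ih h2.1
    refine ⟨hns, hsub'.trans hsub, ?_, le_trans hle hle'⟩
    intro x hxΛ hxf
    exact hmid' x (hmid x hxΛ hxf) (le_trans hxf hle)

lemma desc_finite_of_gcd_one {Λ : Set ℕ} (hΛ : IsNumericalSemigroup Λ) (hd : sgD Λ = 1) :
    (sgDescendants Λ).Finite := by
  set A : Set ℕ := (↑(sgAF Λ) : Set ℕ) with hA
  set M := AddSubmonoid.closure A with hM
  obtain ⟨u, hu, huv⟩ : ∃ u, u ∈ M ∧ u + 1 ∈ M := by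
    let T' : AddSubgroup ℤ :=
      { carrier := {z : ℤ | ∃ u ∈ M, ∃ v ∈ M, (v : ℤ) - (u : ℤ) = z}
        zero_mem' := ⟨0, zero_mem M, 0, zero_mem M, by ring⟩
        add_mem' := by
          rintro x y ⟨u1, hu1, v1, hv1, rfl⟩ ⟨u2, hu2, v2, hv2, rfl⟩
          exact ⟨u1 + u2, add_mem hu1 hu2, v1 + v2, add_mem hv1 hv2, by push_cast; ring⟩
        neg_mem' := by
          rintro x ⟨u1, hu1, v1, hv1, rfl⟩
          exact ⟨v1, hv1, u1, hu1, by ring⟩ }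
    have hone : (1 : ℤ) ∈ T' := by
      obtain ⟨k, hk⟩ := Int.subgroup_cyclic (AddSubgroup.closure ((fun n : ℕ => (n : ℤ)) '' A))
      have hdvd : ∀ a ∈ sgAF Λ, k.natAbs ∣ a := by
        intro a ha
        have hmem : ((a : ℤ)) ∈ AddSubgroup.closure ((fun n : ℕ => (n : ℤ)) '' A) :=
          AddSubgroup.subset_closure ⟨a, ha, rfl⟩
        rw [hk, AddSubgroup.mem_closure_singleton] at hmem
        obtain ⟨n, hn⟩ := hmem
        have hdd : k ∣ (a : ℤ) := ⟨n, by rw [← hn, smul_eq_mul]; ring⟩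
        have := Int.natAbs_dvd_natAbs.mpr hdd
        simpa using this
      have hgcd : k.natAbs ∣ sgD Λ := Finset.dvd_gcd (fun a ha => hdvd a ha)
      rw [hd] at hgcd
      have hk1 : k.natAbs = 1 := Nat.dvd_one.mp hgcd
      have hle : AddSubgroup.closure ((fun n : ℕ => (n : ℤ)) '' A) ≤ T' := by
        rw [AddSubgroup.closure_le]
        rintro z ⟨a, ha, rfl⟩
        exact ⟨0, zero_mem M, a, AddSubmonoid.subset_closure ha, by push_cast; ring⟩
      have hkmem : k ∈ T' := by
        apply hle
        rw [hk]
        exact AddSubgroup.subset_closure rfl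
      rcases Int.natAbs_eq_iff.mp hk1 with rfl | rfl
      · simpa using hkmem
      · have := T'.neg_mem hkmem
        simpa using this
    obtain ⟨u, hu, v, hv, h1⟩ := hone
    have hvu : v = u + 1 := by omega
    exact ⟨u, hu, hvu ▸ hv⟩
  have hcof : ∀ n, u * u ≤ n → n ∈ M := by
    intro n hn
    rcases Nat.eq_zero_or_pos u with rfl | hupos
    · have h1 : (1 : ℕ) ∈ M := by simpa using huv
      have h2 := nsmul_mem h1 n
      simpa using h2
    · have hqr := Nat.div_add_mod n u
      have hrlt : n % u < u := Nat.mod_lt _ hupos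
      have hqu : u ≤ n / u := (Nat.le_div_iff_mul_le hupos).mpr hn
      set q := n / u with hq
      set r := n % u with hr
      have hrq : r ≤ q := le_trans hrlt.le hqu
      have h1 : (q - r) • u + r • (u + 1) ∈ M :=
        add_mem (nsmul_mem hu _) (nsmul_mem huv _)
      have h2 : (q - r) • u + r • (u + 1) = n := by
        simp only [smul_eq_mul]
        have e1 : (q - r) * u = q * u - r * u := Nat.sub_mul q r u
        have e2 : r * u ≤ q * u := Nat.mul_le_mul_right u hrq
        have e4 : r * (u + 1) = r * u + r := by ring
        have e5 : u * q = q * u := mul_comm u q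
        rw [e1, e4]
        omega
      rwa [h2] at h1
  have hAΛ : A ⊆ Λ := fun a ha => (mem_sgAF.mp ha).1
  apply Set.Finite.of_finite_image
    (f := fun s : Set ℕ => s ∩ (↑M : Set ℕ)ᶜ)
  · apply Set.Finite.subset ((Set.finite_Iio (u * u)).finite_subsets)
    rintro t ⟨s, _, rfl⟩
    rintro x ⟨_, hxM⟩
    exact lt_of_not_ge fun hge => hxM (hcof x hge)
  · have key : ∀ s ∈ sgDescendants Λ, (↑M : Set ℕ) ⊆ s := by
      intro s hs
      obtain ⟨hns, _, hmid, _⟩ := desc_props hs hΛ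
      intro x hx
      refine ns_closure_subset hns ?_ x hx
      intro a ha
      obtain ⟨haΛ, haf⟩ := mem_sgAF.mp ha
      exact hmid a haΛ haf
    intro s1 h1 s2 h2 he
    have he' : s1 ∩ (↑M : Set ℕ)ᶜ = s2 ∩ (↑M : Set ℕ)ᶜ := he
    ext x
    by_cases hx : x ∈ (↑M : Set ℕ)
    · simp [key s1 h1 hx, key s2 h2 hx]
    · constructor
      · intro hxs
        have : x ∈ s1 ∩ (↑M : Set ℕ)ᶜ := ⟨hxs, hx⟩
        rw [he'] at this
        exact this.1
      · intro hxs
        have : x ∈ s2 ∩ (↑M : Set ℕ)ᶜ := ⟨hxs, hx⟩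
        rw [← he'] at this
        exact this.1

lemma compl_nonempty {Λ : Set ℕ} (hg : sgGenus Λ ≠ 0) : Λᶜ.Nonempty :=
  Set.nonempty_of_ncard_ne_zero hg

lemma compl_subset_Icc {Λ : Set ℕ} (hΛ : IsNumericalSemigroup Λ) :
    Λᶜ ⊆ Set.Icc 1 (sgFrobenius Λ) := by
  intro x hx
  refine ⟨?_, le_csSup hΛ.2.2.bddAbove hx⟩
  rcases Nat.eq_zero_or_pos x with rfl | h
  · exact absurd hΛ.1 hx
  · exact h

lemma frob_le {Λ : Set ℕ} (hΛ : IsNumericalSemigroup Λ) (hg : 1 ≤ sgGenus Λ) :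
    sgFrobenius Λ + 1 ≤ 2 * sgGenus Λ := by
  have hfc : sgFrobenius Λ ∈ Λᶜ := frob_mem_compl hΛ (compl_nonempty (by omega))
  set f := sgFrobenius Λ with hfdef
  set g := sgGenus Λ with hgdef
  have h1 : (Λ ∩ Set.Iio f).ncard ≤ g := by
    refine Set.ncard_le_ncard_of_injOn (fun x => f - x) ?_ ?_ hΛ.2.2
    · rintro x ⟨hxΛ, hxf⟩
      intro hmem
      have hxx : x + (f - x) = f := by
        simp only [Set.mem_Iio] at hxf; omega
      exact hfc (hxx ▸ hΛ.2.1 x hxΛ _ hmem)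
    · intro x hx y hy hxy
      simp only [Set.mem_inter_iff, Set.mem_Iio] at hx hy
      simp only at hxy
      omega
  have h2 : (Λᶜ ∩ Set.Iio f).ncard = g - 1 := by
    have he : Λᶜ ∩ Set.Iio f = Λᶜ \ {f} := by
      ext x
      simp only [Set.mem_inter_iff, Set.mem_Iio, Set.mem_diff, Set.mem_singleton_iff]
      constructor
      · rintro ⟨h, hlt⟩; exact ⟨h, by omega⟩
      · rintro ⟨h, hne⟩
        have := (compl_subset_Icc hΛ h).2
        exact ⟨h, by omega⟩
    rw [he, Set.ncard_diff_singleton_of_mem hfc]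
    rfl
  have h3 : (Λ ∩ Set.Iio f) ∪ (Λᶜ ∩ Set.Iio f) = Set.Iio f := by
    ext x
    by_cases hx : x ∈ Λ <;> simp [hx]
  have h4 : (Set.Iio f).ncard = f := by
    rw [← Finset.coe_Iio, Set.ncard_coe_finset, Nat.card_Iio]
  have h5 := Set.ncard_union_le (Λ ∩ Set.Iio f) (Λᶜ ∩ Set.Iio f)
  rw [h3] at h5
  omega

lemma genus_set_finite (i : ℕ) : {Λ : Set ℕ | IsNumericalSemigroup Λ ∧ sgGenus Λ = i}.Finite := by
  apply Set.Finite.subset (((Set.finite_Icc 1 (2 * i)).finite_subsets).image compl)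
  rintro Λ ⟨hΛ, hgen⟩
  refine ⟨Λᶜ, ?_, compl_compl Λ⟩
  rcases Nat.eq_zero_or_pos i with rfl | hpos
  · have : Λᶜ = ∅ := (Set.ncard_eq_zero hΛ.2.2).mp hgen
    simp [this]
  · intro x hx
    have h1 := compl_subset_Icc hΛ hx
    have h2 := frob_le hΛ (by omega)
    simp only [Set.mem_Icc] at h1 ⊢
    omega

lemma ord_unique {g : ℕ} (hg : 1 ≤ g) {Λ : Set ℕ} (hord : IsOrdinary Λ)
    (hgen : sgGenus Λ = g) : Λ = {0} ∪ {n : ℕ | g + 1 ≤ n} := by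
  obtain ⟨m, rfl⟩ := hord
  have hc : ({0} ∪ {n : ℕ | m ≤ n})ᶜ = Set.Ico 1 m := by
    ext n
    simp only [Set.mem_compl_iff, Set.mem_union, Set.mem_singleton_iff, Set.mem_setOf_eq,
      Set.mem_Ico]
    omega
  have hnc : sgGenus ({0} ∪ {n : ℕ | m ≤ n}) = m - 1 := by
    rw [sgGenus, hc, ← Finset.coe_Ico, Set.ncard_coe_finset, Nat.card_Ico]
  have hm : m = g + 1 := by
    rw [hnc] at hgen
    rcases Nat.eq_zero_or_pos m with rfl | hpos
    · omega
    · omega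
  rw [hm]

lemma frob_ge {g : ℕ} (hg : 1 ≤ g) {Λ : Set ℕ} (hΛ : IsNumericalSemigroup Λ)
    (hgen : sgGenus Λ = g) (hord : ¬ IsOrdinary Λ) : g + 1 ≤ sgFrobenius Λ := by
  set f := sgFrobenius Λ with hf
  have hfc : f ∈ Λᶜ := frob_mem_compl hΛ (compl_nonempty (by omega))
  have hsub : Λᶜ ⊆ Set.Icc 1 f := compl_subset_Icc hΛ
  have hIcc : (Set.Icc 1 f).ncard = f := by
    rw [← Finset.coe_Icc, Set.ncard_coe_finset, Nat.card_Icc]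
    omega
  have hgle : g ≤ f := by
    have := Set.ncard_le_ncard hsub (Set.finite_Icc 1 f)
    rw [hIcc] at this
    have hgeq : Λᶜ.ncard = g := hgen
    omega
  rcases Nat.lt_or_ge g f with h | h
  · omega
  · exfalso
    have hfg : f = g := by omega
    have heq : Λᶜ = Set.Icc 1 f := by
      apply Set.eq_of_subset_of_ncard_le hsub _ (Set.finite_Icc 1 f)
      rw [hIcc]
      have hgeq : Λᶜ.ncard = g := hgen
      omega
    apply hord
    refine ⟨g + 1, ?_⟩
    ext x
    have hx : x ∉ Λ ↔ x ∈ Set.Icc 1 f := by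
      rw [← heq]; rfl
    simp only [Set.mem_Icc, hfg] at hx
    simp only [Set.mem_union, Set.mem_singleton_iff, Set.mem_setOf_eq]
    by_cases hxΛ : x ∈ Λ <;> simp [hxΛ] at hx ⊢ <;> omega

lemma key_struct {g : ℕ} (hg : 1 ≤ g) {Λ : Set ℕ} (hΛ : IsNumericalSemigroup Λ)
    (hgen : sgGenus Λ = g) (hinf : (sgDescendants Λ).Infinite) (hord : ¬ IsOrdinary Λ) :
    2 ≤ sgD Λ ∧ sgD Λ ≤ g ∧ IsNumericalSemigroup (sgS Λ) ∧ sgGenus (sgS Λ) ≤ (g - 1) / 2 := by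
  classical
  set f := sgFrobenius Λ with hf
  have hfc : f ∈ Λᶜ := frob_mem_compl hΛ (compl_nonempty (by omega))
  have hf1 : g + 1 ≤ f := frob_ge hg hΛ hgen hord
  -- multiplicity
  have hmul : (Λ \ {0}).Nonempty :=
    ⟨f + 1, ns_mem_of_frob_lt hΛ (lt_add_one f), by simp⟩
  set m := sInf (Λ \ {0}) with hmdef
  have hmmem : m ∈ Λ \ {0} := Nat.sInf_mem hmul
  have hmgaps : ∀ k, 1 ≤ k → k < m → k ∈ Λᶜ := by
    intro k h1 h2 hk
    have hkm : k ∈ Λ \ {0} := ⟨hk, by simp; omega⟩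
    exact absurd (Nat.sInf_le hkm) (not_le.mpr h2)
  have hm_le : m ≤ g + 1 := by
    by_contra hcon
    push_neg at hcon
    have hsub2 : Set.Icc 1 (g + 1) ⊆ Λᶜ := by
      intro k hk
      simp only [Set.mem_Icc] at hk
      exact hmgaps k hk.1 (by omega)
    have := Set.ncard_le_ncard hsub2 hΛ.2.2
    rw [← Finset.coe_Icc, Set.ncard_coe_finset, Nat.card_Icc] at this
    have hgeq : Λᶜ.ncard = g := hgen
    omega
  have hm_ne : m ≠ g + 1 := by
    intro hmeq
    have hsub2 : Set.Icc 1 g ⊆ Λᶜ := by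
      intro k hk
      simp only [Set.mem_Icc] at hk
      exact hmgaps k hk.1 (by omega)
    have heq : Set.Icc 1 g = Λᶜ := by
      apply Set.eq_of_subset_of_ncard_le hsub2 _ hΛ.2.2
      rw [← Finset.coe_Icc, Set.ncard_coe_finset, Nat.card_Icc]
      have hgeq : Λᶜ.ncard = g := hgen
      omega
    rw [← heq] at hfc
    simp only [Set.mem_Icc] at hfc
    omega
  have hmg : m ≤ g := by omega
  have hdm : sgD Λ ∣ m := sgD_dvd hmmem.1 (by omega)
  have hm0 : m ≠ 0 := by
    have := hmmem.2; simpa using this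
  have hd0 : sgD Λ ≠ 0 := by
    rintro h0
    rw [h0] at hdm
    exact hm0 (Nat.eq_zero_of_zero_dvd hdm)
  have hd1 : sgD Λ ≠ 1 := fun h => hinf (desc_finite_of_gcd_one hΛ h)
  have hd2 : 2 ≤ sgD Λ := by omega
  have hdg : sgD Λ ≤ g := le_trans (Nat.le_of_dvd (by omega) hdm) hmg
  -- sgS is a numerical semigroup
  have hScompl : (sgS Λ)ᶜ ⊆ Set.Iic f := by
    intro x hx
    simp only [sgS, Set.mem_compl_iff, Set.mem_setOf_eq] at hx
    have hdx : sgD Λ * x ≤ f := by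
      by_contra hcon
      exact hx (ns_mem_of_frob_lt hΛ (by omega))
    have : x ≤ sgD Λ * x := Nat.le_mul_of_pos_left x (by omega)
    simp only [Set.mem_Iic]
    omega
  have hSNS : IsNumericalSemigroup (sgS Λ) := by
    refine ⟨?_, ?_, ?_⟩
    · show sgD Λ * 0 ∈ Λ
      simpa using hΛ.1
    · intro a ha b hb
      show sgD Λ * (a + b) ∈ Λ
      rw [mul_add]
      exact hΛ.2.1 _ ha _ hb
    · exact (Set.finite_Iic f).subset hScompl
  -- genus bound
  set N : Finset ℕ := (Finset.Icc 1 f).filter (fun n => ¬ sgD Λ ∣ n) with hN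
  have hNcard : N.card = f - f / sgD Λ := by
    have h1 : ((Finset.Icc 1 f).filter (fun n => sgD Λ ∣ n)).card = f / sgD Λ := by
      have : Finset.Icc 1 f = Finset.Ioc 0 f := by
        rw [← Finset.Icc_add_one_left_eq_Ioc, zero_add]
      rw [this]
      exact Nat.Ioc_filter_dvd_card_eq_div f (sgD Λ)
    have h2 := Finset.card_filter_add_card_filter_not
      (s := Finset.Icc 1 f) (p := fun n => sgD Λ ∣ n)
    have h3 : (Finset.Icc 1 f).card = f := by simp [Nat.card_Icc]
    rw [hN]
    omega
  have hNsub : (↑N : Set ℕ) ⊆ Λᶜ := by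
    intro n hn
    simp only [hN, Finset.coe_filter, Finset.mem_Icc, Set.mem_setOf_eq] at hn
    obtain ⟨⟨hn1, hnf⟩, hnd⟩ := hn
    intro hnΛ
    exact hnd (sgD_dvd hnΛ hnf)
  have him : (sgS Λ)ᶜ.ncard ≤ (Λᶜ \ ↑N).ncard := by
    refine Set.ncard_le_ncard_of_injOn (fun x => sgD Λ * x) ?_ ?_ (hΛ.2.2.diff)
    · intro x hx
      simp only [sgS, Set.mem_compl_iff, Set.mem_setOf_eq] at hx
      refine ⟨hx, ?_⟩
      simp only [hN, Finset.coe_filter, Finset.mem_Icc, Set.mem_setOf_eq]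
      rintro ⟨_, hnd⟩
      exact hnd ⟨x, rfl⟩
    · intro x _ y _ hxy
      simp only at hxy
      exact Nat.eq_of_mul_eq_mul_left (by omega) hxy
  have hdiff : (Λᶜ \ ↑N).ncard + (↑N : Set ℕ).ncard = Λᶜ.ncard :=
    Set.ncard_diff_add_ncard_of_subset hNsub hΛ.2.2
  have hNn : (↑N : Set ℕ).ncard = f - f / sgD Λ := by
    rw [Set.ncard_coe_finset, hNcard]
  have hdd : f / sgD Λ ≤ f / 2 := Nat.div_le_div_left hd2 two_pos
  have hgoal : sgGenus (sgS Λ) ≤ (g - 1) / 2 := by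
    have hgeq : Λᶜ.ncard = g := hgen
    have : sgGenus (sgS Λ) = (sgS Λ)ᶜ.ncard := rfl
    omega
  exact ⟨hd2, hdg, hSNS, hgoal⟩

lemma subset_helper {Λ1 Λ2 : Set ℕ} (h1 : IsNumericalSemigroup Λ1)
    (h2 : IsNumericalSemigroup Λ2) (hd : sgD Λ1 = sgD Λ2) (hS : sgS Λ1 = sgS Λ2)
    (hf : sgFrobenius Λ1 ≤ sgFrobenius Λ2) : Λ2 ⊆ Λ1 := by
  intro x hx
  by_cases hxf : x ≤ sgFrobenius Λ2
  · obtain ⟨y, rfl⟩ := sgD_dvd hx hxf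
    have hy : y ∈ sgS Λ2 := hx
    rw [← hS] at hy
    have hy' : sgD Λ1 * y ∈ Λ1 := hy
    rwa [hd] at hy'
  · exact ns_mem_of_frob_lt h1 (by omega)

lemma S_inj {g : ℕ} {Λ1 Λ2 : Set ℕ} (h1 : IsNumericalSemigroup Λ1)
    (h2 : IsNumericalSemigroup Λ2) (hg1 : sgGenus Λ1 = g) (hg2 : sgGenus Λ2 = g)
    (hd : sgD Λ1 = sgD Λ2) (hS : sgS Λ1 = sgS Λ2) : Λ1 = Λ2 := by
  rcases le_total (sgFrobenius Λ1) (sgFrobenius Λ2) with h | h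
  · have hss := subset_helper h1 h2 hd hS h
    have hcc : Λ1ᶜ ⊆ Λ2ᶜ := Set.compl_subset_compl.mpr hss
    have := Set.eq_of_subset_of_ncard_le hcc (by rw [← sgGenus, ← sgGenus, hg1, hg2]) h2.2.2
    exact compl_injective this
  · have hss := subset_helper h2 h1 hd.symm hS.symm h
    have hcc : Λ2ᶜ ⊆ Λ1ᶜ := Set.compl_subset_compl.mpr hss
    have := Set.eq_of_subset_of_ncard_le hcc (by rw [← sgGenus, ← sgGenus, hg1, hg2]) h1.2.2
    exact (compl_injective this).symm

lemma ncard_biUnion_le {ι α : Type*} (s : Finset ι) (t : ι → Set α) :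
    (⋃ i ∈ s, t i).ncard ≤ ∑ i ∈ s, (t i).ncard := by
  classical
  induction s using Finset.induction_on with
  | empty => simp
  | insert _ _ ha ih =>
    rename_i a s'
    rw [Finset.sum_insert ha]
    calc (⋃ i ∈ insert a s', t i).ncard = (t a ∪ ⋃ i ∈ s', t i).ncard := by
          rw [Finset.set_biUnion_insert]
      _ ≤ (t a).ncard + (⋃ i ∈ s', t i).ncard := Set.ncard_union_le _ _
      _ ≤ (t a).ncard + ∑ i ∈ s', (t i).ncard := by omega

theorem stmt18 (g : ℕ) (hg : 1 ≤ g) :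
    {Λ : Set ℕ | IsNumericalSemigroup Λ ∧ sgGenus Λ = g ∧ (sgDescendants Λ).Infinite}.ncard ≤
      1 + (g - 1) * ∑ i ∈ Finset.range ((g - 1) / 2 + 1),
        {Λ : Set ℕ | IsNumericalSemigroup Λ ∧ sgGenus Λ = i}.ncard := by
  classical
  set B := (g - 1) / 2 with hB
  set U : ℕ → Set (Set ℕ) := fun i => {Λ : Set ℕ | IsNumericalSemigroup Λ ∧ sgGenus Λ = i}
    with hU
  set L : Set (Set ℕ) :=
    {Λ : Set ℕ | IsNumericalSemigroup Λ ∧ sgGenus Λ = g ∧ (sgDescendants Λ).Infinite} with hLdef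
  have hLfin : L.Finite := (genus_set_finite g).subset (fun Λ hΛ => ⟨hΛ.1, hΛ.2.1⟩)
  set O : Set ℕ := {0} ∪ {n : ℕ | g + 1 ≤ n} with hO
  -- every non-O member of L is non-ordinary
  have hno : ∀ Λ ∈ L \ {O}, ¬ IsOrdinary Λ := by
    rintro Λ ⟨hΛ, hne⟩ hord
    exact hne (ord_unique hg hord hΛ.2.1)
  -- the union over d
  set Ld : ℕ → Set (Set ℕ) := fun d => {Λ ∈ L \ {O} | sgD Λ = d} with hLd
  have hcover : L \ {O} ⊆ ⋃ d ∈ Finset.Icc 2 g, Ld d := by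
    intro Λ hΛ
    obtain ⟨hd2, hdg, _, _⟩ := key_struct hg hΛ.1.1 hΛ.1.2.1 hΛ.1.2.2 (hno Λ hΛ)
    exact Set.mem_biUnion (Finset.mem_Icc.mpr ⟨hd2, hdg⟩) ⟨hΛ, rfl⟩
  -- UU : target of the injection
  set UU : Set (Set ℕ) := {Λ' : Set ℕ | IsNumericalSemigroup Λ' ∧ sgGenus Λ' ≤ B} with hUU
  have hUUeq : UU = ⋃ i ∈ Finset.range (B + 1), U i := by
    ext Λ'
    simp only [hUU, hU, Set.mem_setOf_eq, Set.mem_iUnion, Finset.mem_range, Nat.lt_succ_iff]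
    constructor
    · rintro ⟨h1, h2⟩; exact ⟨sgGenus Λ', h2, h1, rfl⟩
    · rintro ⟨i, hi, h1, h2⟩; exact ⟨h1, h2 ▸ hi⟩
  have hUUfin : UU.Finite := by
    rw [hUUeq]
    apply Set.Finite.biUnion (Finset.finite_toSet _)
    intro i _
    exact genus_set_finite i
  -- each Ld injects into UU
  have hLdcard : ∀ d ∈ Finset.Icc 2 g, (Ld d).ncard ≤ UU.ncard := by
    intro d _
    have hinj : Set.InjOn sgS (Ld d) := by
      rintro Λ1 ⟨h1, hd1⟩ Λ2 ⟨h2, hd2⟩ hS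
      exact S_inj h1.1.1 h2.1.1 h1.1.2.1 h2.1.2.1 (by rw [hd1, hd2]) hS
    have hmaps : ∀ Λ ∈ Ld d, sgS Λ ∈ UU := by
      rintro Λ ⟨hΛ, _⟩
      obtain ⟨_, _, hSNS, hSg⟩ := key_struct hg hΛ.1.1 hΛ.1.2.1 hΛ.1.2.2 (hno Λ hΛ)
      exact ⟨hSNS, hSg⟩
    exact Set.ncard_le_ncard_of_injOn sgS hmaps hinj hUUfin
  -- summing
  have hstep1 : (L \ {O}).ncard ≤ (g - 1) * UU.ncard := by
    have h1 : (L \ {O}).ncard ≤ (⋃ d ∈ Finset.Icc 2 g, Ld d).ncard := by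
      refine Set.ncard_le_ncard hcover ?_
      exact Set.Finite.biUnion (Finset.finite_toSet _)
        (fun d _ => hLfin.subset (fun Λ hΛ => hΛ.1.1))
    have h2 := ncard_biUnion_le (Finset.Icc 2 g) Ld
    have h3 : ∑ d ∈ Finset.Icc 2 g, (Ld d).ncard ≤ ∑ d ∈ Finset.Icc 2 g, UU.ncard :=
      Finset.sum_le_sum hLdcard
    have h4 : ∑ d ∈ Finset.Icc 2 g, UU.ncard = (g - 1) * UU.ncard := by
      rw [Finset.sum_const, smul_eq_mul, Nat.card_Icc]
      have he : g + 1 - 2 = g - 1 := by omega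
      rw [he]
    omega
  have hstep2 : UU.ncard ≤ ∑ i ∈ Finset.range (B + 1), (U i).ncard := by
    rw [hUUeq]
    exact ncard_biUnion_le _ _
  have hstep3 : L.ncard ≤ 1 + (L \ {O}).ncard := by
    have hsub : L ⊆ insert O (L \ {O}) := by
      intro Λ hΛ
      by_cases h : Λ = O
      · rw [h]; exact Set.mem_insert _ _
      · exact Set.mem_insert_of_mem _ ⟨hΛ, h⟩
    have h1 : L.ncard ≤ (insert O (L \ {O})).ncard :=
      Set.ncard_le_ncard hsub ((hLfin.diff).insert O)
    have h2 : (insert O (L \ {O})).ncard ≤ (L \ {O}).ncard + 1 :=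
      Set.ncard_insert_le _ _
    omega
  calc L.ncard ≤ 1 + (L \ {O}).ncard := hstep3
    _ ≤ 1 + (g - 1) * UU.ncard := by omega
    _ ≤ 1 + (g - 1) * ∑ i ∈ Finset.range (B + 1), (U i).ncard := by
        have := Nat.mul_le_mul_left (g - 1) hstep2
        omega
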